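/- arXiv:0811.4234 — 5 statements merged into one kernel-verified Lean document; each statement's English description precedes it below -/
import Mathlib

section
/- The map π : L²([0,1],ℝ) × L²([0,1],ℂ) → L²([0,1],ℂ) given by π(f,ξ)(t) = e^{i f(t)} ξ(t) is jointly continuous. -/
open MeasureTheory Complex ENNReal

lemma norm_exp_I_mul_ofReal (b : ℝ) : ‖Complex.exp (Complex.I * b)‖ = 1 := by
  rw [Complex.norm_exp]
  simp

lemma norm_exp_I_mul_sub_one (c : ℝ) : ‖Complex.exp (Complex.I * c) - 1‖ ≤ |c| := by
  have h1 : Complex.exp (Complex.I * c) = Real.cos c + Real.sin c * Complex.I := by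
    rw [mul_comm, Complex.exp_mul_I]
    push_cast [Complex.ofReal_cos, Complex.ofReal_sin]
    ring
  have h2 : ‖Complex.exp (Complex.I * c) - 1‖ ^ 2 = (Real.cos c - 1)^2 + (Real.sin c)^2 := by
    rw [h1]
    have : (Real.cos c : ℂ) + Real.sin c * Complex.I - 1 = ((Real.cos c - 1 : ℝ) : ℂ) + (Real.sin c : ℝ) * Complex.I := by push_cast; ring
    rw [this, ← Complex.normSq_eq_norm_sq, Complex.normSq_add_mul_I]
  have hcos : Real.cos c = 1 - 2 * Real.sin (c/2)^2 := by
    have h := Real.cos_two_mul (c/2)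
    rw [show 2*(c/2) = c by ring] at h
    nlinarith [Real.sin_sq_add_cos_sq (c/2)]
  have hsin : Real.sin (c/2)^2 ≤ (c/2)^2 := Real.sin_sq_le_sq
  have hsq : ‖Complex.exp (Complex.I * c) - 1‖ ^ 2 ≤ |c| ^ 2 := by
    rw [h2, _root_.sq_abs]
    nlinarith [Real.sin_sq_add_cos_sq c]
  nlinarith [norm_nonneg (Complex.exp (Complex.I * c) - 1), abs_nonneg c]

lemma norm_exp_I_mul_sub (a b : ℝ) :
    ‖Complex.exp (Complex.I * a) - Complex.exp (Complex.I * b)‖ ≤ |a - b| := by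
  have h : Complex.exp (Complex.I * a) - Complex.exp (Complex.I * b)
      = Complex.exp (Complex.I * b) * (Complex.exp (Complex.I * ((a - b : ℝ) : ℂ)) - 1) := by
    rw [mul_sub, ← Complex.exp_add, mul_one]
    push_cast
    ring_nf
  rw [h, norm_mul, _root_.norm_exp_I_mul_ofReal, one_mul]
  exact norm_exp_I_mul_sub_one (a - b)

lemma aesm_exp_I_mul {μ : Measure ℝ} (f : Lp ℝ 2 μ) :
    AEStronglyMeasurable (fun t => Complex.exp (Complex.I * ((f : ℝ → ℝ) t))) μ :=
  (Complex.continuous_exp.comp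
    (continuous_const.mul Complex.continuous_ofReal)).comp_aestronglyMeasurable
    (Lp.aestronglyMeasurable f)

lemma memℒp_pi {μ : Measure ℝ} (f : Lp ℝ 2 μ) (ξ : Lp ℂ 2 μ) :
    MemLp (fun t => Complex.exp (Complex.I * ((f : ℝ → ℝ) t)) * (ξ : ℝ → ℂ) t) 2 μ := by
  refine ⟨(aesm_exp_I_mul f).mul (Lp.aestronglyMeasurable ξ), ?_⟩
  refine lt_of_le_of_lt (eLpNorm_mono fun t => ?_) (Lp.eLpNorm_lt_top ξ)
  rw [norm_mul, _root_.norm_exp_I_mul_ofReal, one_mul]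

theorem stmt_3
    (μ : Measure ℝ) (hμ : μ = volume.restrict (Set.Icc (0:ℝ) 1)) :
    ∃ π : Lp ℝ 2 μ × Lp ℂ 2 μ → Lp ℂ 2 μ,
      (∀ p : Lp ℝ 2 μ × Lp ℂ 2 μ,
        (π p : ℝ → ℂ) =ᵐ[μ]
          fun t => Complex.exp (Complex.I * ((p.1 : ℝ → ℝ) t)) * (p.2 : ℝ → ℂ) t) ∧
      Continuous π := by
  refine ⟨fun p => (memℒp_pi p.1 p.2).toLp _, fun p => MemLp.coeFn_toLp _, ?_⟩
  rw [Metric.continuous_iff]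
  rintro ⟨f₀, ξ₀⟩ ε hε
  obtain ⟨s, hs⟩ := Metric.denseRange_iff.mp
    (Lp.simpleFunc.denseRange (E := ℂ) (μ := μ) (by norm_num : (2:ℝ≥0∞) ≠ ∞)) ξ₀ (ε/8)
    (by positivity)
  obtain ⟨C, hC⟩ := (Lp.simpleFunc.toSimpleFunc s).exists_forall_norm_le
  set M : ℝ := max C 0 with hM
  have hM0 : 0 ≤ M := le_max_right _ _
  have hsM : ∀ᵐ t ∂μ, ‖((s : Lp ℂ 2 μ) : ℝ → ℂ) t‖ ≤ M := by
    filter_upwards [Lp.simpleFunc.toSimpleFunc_eq_toFun s] with t ht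
    rw [← ht]; exact (hC t).trans (le_max_left _ _)
  have hM1 : 0 < 8 * (M + 1) := by positivity
  refine ⟨min (ε/8) (ε/(8*(M+1))), lt_min (by positivity) (by positivity), ?_⟩
  set δ : ℝ := min (ε/8) (ε/(8*(M+1))) with hδ
  rintro ⟨f, ξ⟩ hdist
  rw [Prod.dist_eq, max_lt_iff] at hdist
  have hdf : dist f f₀ ≤ δ := hdist.1.le
  have hdξ : dist ξ ξ₀ ≤ δ := hdist.2.le
  set G : ℝ → ℂ := fun t => Complex.exp (Complex.I * ((f : ℝ → ℝ) t)) with hG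
  set G₀ : ℝ → ℂ := fun t => Complex.exp (Complex.I * ((f₀ : ℝ → ℝ) t)) with hG₀
  have hGm : AEStronglyMeasurable G μ := aesm_exp_I_mul f
  have hG₀m : AEStronglyMeasurable G₀ μ := aesm_exp_I_mul f₀
  -- decomposition
  have hdecomp : (fun t => G t * (ξ : ℝ → ℂ) t - G₀ t * (ξ₀ : ℝ → ℂ) t)
      = (fun t => G t * ((ξ : ℝ → ℂ) t - (ξ₀ : ℝ → ℂ) t))
        + ((fun t => (G t - G₀ t) * ((ξ₀ : ℝ → ℂ) t - ((s : Lp ℂ 2 μ) : ℝ → ℂ) t))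
          + fun t => (G t - G₀ t) * ((s : Lp ℂ 2 μ) : ℝ → ℂ) t) := by
    funext t; simp only [Pi.add_apply]; ring
  have hA : eLpNorm (fun t => G t * ((ξ : ℝ → ℂ) t - (ξ₀ : ℝ → ℂ) t)) 2 μ
      ≤ eLpNorm ((ξ : ℝ → ℂ) - (ξ₀ : ℝ → ℂ)) 2 μ := by
    refine eLpNorm_mono fun t => ?_
    rw [norm_mul, _root_.norm_exp_I_mul_ofReal, one_mul, Pi.sub_apply]
  have hB : eLpNorm (fun t => (G t - G₀ t) * ((ξ₀ : ℝ → ℂ) t - ((s : Lp ℂ 2 μ) : ℝ → ℂ) t)) 2 μ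
      ≤ 2 * eLpNorm ((ξ₀ : ℝ → ℂ) - ((s : Lp ℂ 2 μ) : ℝ → ℂ)) 2 μ := by
    have := eLpNorm_mono_ae (μ := μ) (p := 2)
      (g := (2:ℝ) • ((ξ₀ : ℝ → ℂ) - ((s : Lp ℂ 2 μ) : ℝ → ℂ)))
      (f := fun t => (G t - G₀ t) * ((ξ₀ : ℝ → ℂ) t - ((s : Lp ℂ 2 μ) : ℝ → ℂ) t)) ?_
    · refine this.trans ?_
      rw [eLpNorm_const_smul]
      rw [Real.enorm_eq_ofReal (by norm_num : (0:ℝ) ≤ 2), ENNReal.ofReal_ofNat]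
    · refine Filter.Eventually.of_forall fun t => ?_
      rw [norm_mul, Pi.smul_apply, Pi.sub_apply, norm_smul]
      have h2 : ‖G t - G₀ t‖ ≤ 2 := by
        refine (norm_sub_le _ _).trans ?_
        rw [hG, hG₀, _root_.norm_exp_I_mul_ofReal, _root_.norm_exp_I_mul_ofReal]; norm_num
      have := mul_le_mul_of_nonneg_right h2 (norm_nonneg
        ((ξ₀ : ℝ → ℂ) t - ((s : Lp ℂ 2 μ) : ℝ → ℂ) t))
      simpa [mul_comm] using this.trans_eq (by norm_num)
  have hCbd : eLpNorm (fun t => (G t - G₀ t) * ((s : Lp ℂ 2 μ) : ℝ → ℂ) t) 2 μ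
      ≤ ENNReal.ofReal M * eLpNorm ((f : ℝ → ℝ) - (f₀ : ℝ → ℝ)) 2 μ := by
    have := eLpNorm_mono_ae (μ := μ) (p := 2)
      (g := M • ((f : ℝ → ℝ) - (f₀ : ℝ → ℝ)))
      (f := fun t => (G t - G₀ t) * ((s : Lp ℂ 2 μ) : ℝ → ℂ) t) ?_
    · refine this.trans ?_
      rw [eLpNorm_const_smul, Real.enorm_eq_ofReal hM0]
    · filter_upwards [hsM] with t ht
      rw [Pi.smul_apply, Pi.sub_apply, norm_smul, Real.norm_eq_abs, _root_.abs_of_nonneg hM0]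
      calc ‖(G t - G₀ t) * ((s : Lp ℂ 2 μ) : ℝ → ℂ) t‖
          = ‖G t - G₀ t‖ * ‖((s : Lp ℂ 2 μ) : ℝ → ℂ) t‖ := norm_mul _ _
        _ ≤ |(f : ℝ → ℝ) t - (f₀ : ℝ → ℝ) t| * M := by
            refine mul_le_mul (norm_exp_I_mul_sub _ _) ht (norm_nonneg _) (abs_nonneg _)
        _ = M * ‖(f : ℝ → ℝ) t - (f₀ : ℝ → ℝ) t‖ := by rw [Real.norm_eq_abs]; ring
  -- combine
  have hsum : eLpNorm (fun t => G t * (ξ : ℝ → ℂ) t - G₀ t * (ξ₀ : ℝ → ℂ) t) 2 μ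
      ≤ eLpNorm ((ξ : ℝ → ℂ) - (ξ₀ : ℝ → ℂ)) 2 μ
        + (2 * eLpNorm ((ξ₀ : ℝ → ℂ) - ((s : Lp ℂ 2 μ) : ℝ → ℂ)) 2 μ
          + ENNReal.ofReal M * eLpNorm ((f : ℝ → ℝ) - (f₀ : ℝ → ℝ)) 2 μ) := by
    rw [hdecomp]
    refine (eLpNorm_add_le (hGm.mul ((Lp.aestronglyMeasurable ξ).sub
        (Lp.aestronglyMeasurable ξ₀)))
      (((hGm.sub hG₀m).mul ((Lp.aestronglyMeasurable ξ₀).sub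
          (Lp.aestronglyMeasurable ((s : Lp ℂ 2 μ))))).add
        ((hGm.sub hG₀m).mul (Lp.aestronglyMeasurable ((s : Lp ℂ 2 μ))))) one_le_two).trans ?_
    refine add_le_add hA ?_
    refine (eLpNorm_add_le ((hGm.sub hG₀m).mul ((Lp.aestronglyMeasurable ξ₀).sub
        (Lp.aestronglyMeasurable ((s : Lp ℂ 2 μ)))))
      ((hGm.sub hG₀m).mul (Lp.aestronglyMeasurable ((s : Lp ℂ 2 μ)))) one_le_two).trans ?_
    exact add_le_add hB hCbd
  have hkey : eLpNorm (fun t => G t * (ξ : ℝ → ℂ) t - G₀ t * (ξ₀ : ℝ → ℂ) t) 2 μ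
      ≤ ENNReal.ofReal (ε/2) := by
    refine hsum.trans ?_
    have e1 : eLpNorm ((ξ : ℝ → ℂ) - (ξ₀ : ℝ → ℂ)) 2 μ ≤ ENNReal.ofReal δ := by
      rw [← Lp.edist_def, edist_dist]
      exact ENNReal.ofReal_le_ofReal hdξ
    have e2 : eLpNorm ((ξ₀ : ℝ → ℂ) - ((s : Lp ℂ 2 μ) : ℝ → ℂ)) 2 μ ≤ ENNReal.ofReal (ε/8) := by
      rw [← Lp.edist_def, edist_dist]
      exact ENNReal.ofReal_le_ofReal hs.le
    have e3 : eLpNorm ((f : ℝ → ℝ) - (f₀ : ℝ → ℝ)) 2 μ ≤ ENNReal.ofReal δ := by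
      rw [← Lp.edist_def, edist_dist]
      exact ENNReal.ofReal_le_ofReal hdf
    calc eLpNorm ((ξ : ℝ → ℂ) - (ξ₀ : ℝ → ℂ)) 2 μ
          + (2 * eLpNorm ((ξ₀ : ℝ → ℂ) - ((s : Lp ℂ 2 μ) : ℝ → ℂ)) 2 μ
            + ENNReal.ofReal M * eLpNorm ((f : ℝ → ℝ) - (f₀ : ℝ → ℝ)) 2 μ)
        ≤ ENNReal.ofReal δ + (2 * ENNReal.ofReal (ε/8) + ENNReal.ofReal M * ENNReal.ofReal δ) := by
          refine add_le_add e1 (add_le_add ?_ ?_)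
          · exact mul_le_mul_right e2 2
          · exact mul_le_mul_right e3 _
      _ = ENNReal.ofReal (δ + (2 * (ε/8) + M * δ)) := by
          rw [← ENNReal.ofReal_mul hM0, ← ENNReal.ofReal_ofNat,
            ← ENNReal.ofReal_mul (by norm_num), ← ENNReal.ofReal_add (by positivity)
              (mul_nonneg hM0 (le_min (by positivity) (by positivity))),
            ← ENNReal.ofReal_add (le_min (by positivity) (by positivity)) (by positivity)]
      _ ≤ ENNReal.ofReal (ε/2) := by
          refine ENNReal.ofReal_le_ofReal ?_
          have h1 : δ ≤ ε/8 := min_le_left _ _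
          have h2 : δ ≤ ε/(8*(M+1)) := min_le_right _ _
          have h3 : M * δ ≤ ε/8 := by
            calc M * δ ≤ M * (ε/(8*(M+1))) := mul_le_mul_of_nonneg_left h2 hM0
              _ = (M*ε)/(8*(M+1)) := (mul_div_assoc' M ε _)
              _ ≤ ε/8 := by
                  rw [div_le_div_iff₀ hM1 (by norm_num)]
                  nlinarith
          linarith
  -- conclude
  have hfun : (((memℒp_pi f ξ).toLp _ : Lp ℂ 2 μ) : ℝ → ℂ)
        - (((memℒp_pi f₀ ξ₀).toLp _ : Lp ℂ 2 μ) : ℝ → ℂ)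
      =ᵐ[μ] fun t => G t * (ξ : ℝ → ℂ) t - G₀ t * (ξ₀ : ℝ → ℂ) t := by
    filter_upwards [MemLp.coeFn_toLp (memℒp_pi f ξ), MemLp.coeFn_toLp (memℒp_pi f₀ ξ₀)]
      with t h1 h2
    simp only [Pi.sub_apply, h1, h2]
    rfl
  rw [Lp.dist_def]
  have := eLpNorm_congr_ae (p := 2) hfun
  rw [this]
  have hfin := hkey.trans_lt (ENNReal.ofReal_lt_top)
  calc (eLpNorm (fun t => G t * (ξ : ℝ → ℂ) t - G₀ t * (ξ₀ : ℝ → ℂ) t) 2 μ).toReal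
      ≤ ε/2 := ENNReal.toReal_le_of_le_ofReal (by positivity) hkey
    _ < ε := by linarith
end

section
/- Let M ⊆ [0,1] be a measurable set such that for every λ ∈ [0,1] the function t ↦ |t-λ|^{-1} χ_M(t) belongs to L²([0,1],ℂ). Then M has Lebesgue measure zero. -/
open MeasureTheory Metric Filter ENNReal NNReal Topology

theorem stmt_11
    (μ : Measure ℝ) (hμ : μ = volume.restrict (Set.Icc (0:ℝ) 1))
    (M : Set ℝ) (hMmeas : MeasurableSet M) (hMsub : M ⊆ Set.Icc (0:ℝ) 1)
    (hL2 : ∀ lam ∈ Set.Icc (0:ℝ) 1,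
      MemLp (fun t => M.indicator (fun t => |t - lam|⁻¹) t) 2 μ) :
    volume M = 0 := by
  by_contra hM0
  -- find a Lebesgue density point of M
  have hdens := Besicovitch.ae_tendsto_measure_inter_div (volume : Measure ℝ) M
  have hmem : ∀ᵐ x ∂(volume.restrict M), x ∈ M := ae_restrict_mem hMmeas
  have hne : (volume.restrict M) ≠ 0 := by
    simpa [Measure.restrict_eq_zero] using hM0
  haveI : (ae (volume.restrict M)).NeBot := ae_neBot.mpr hne
  obtain ⟨lam, hlamd, hlamM⟩ := (hdens.and hmem).exists
  have hlam01 : lam ∈ Set.Icc (0:ℝ) 1 := hMsub hlamM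
  set f : ℝ → ℝ := fun t => M.indicator (fun t => |t - lam|⁻¹) t with hf
  -- the L² integral is finite
  have hC : (∫⁻ a, (‖f a‖₊ : ℝ≥0∞) ^ ((2:ℝ≥0∞).toReal) ∂μ) < ∞ :=
    lintegral_rpow_enorm_lt_top_of_eLpNorm_lt_top (by norm_num) (by norm_num)
      (hL2 lam hlam01).2
  set C : ℝ≥0∞ := ∫⁻ a, (‖f a‖₊ : ℝ≥0∞) ^ ((2:ℝ≥0∞).toReal) ∂μ with hCdef
  -- density: eventually the ratio exceeds 3/4
  have h34 : ∀ᶠ r in 𝓝[>] (0:ℝ),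
      (3/4 : ℝ≥0∞) < volume (M ∩ closedBall lam r) / volume (closedBall lam r) :=
    hlamd.eventually_const_lt (by norm_num [ENNReal.div_lt_iff])
  -- pick a small radius
  set δ : ℝ := min 1 (1 / (2 * (C.toReal + 1))) with hδdef
  have hδpos : 0 < δ := by
    have : 0 < C.toReal + 1 := by positivity
    apply lt_min one_pos
    positivity
  have hIoo : Set.Ioo (0:ℝ) δ ∈ 𝓝[>] (0:ℝ) := Ioo_mem_nhdsGT_of_mem ⟨le_refl _, hδpos⟩
  obtain ⟨r, hr34, hr0, hrδ⟩ := (h34.and (eventually_of_mem hIoo (fun x hx => hx))).exists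
  -- the annulus
  set A : Set ℝ := (M ∩ closedBall lam r) \ closedBall lam (r/2) with hA
  have hAmeas : MeasurableSet A :=
    ((hMmeas.inter measurableSet_closedBall).diff measurableSet_closedBall)
  have hAsub : A ⊆ M := fun x hx => hx.1.1
  -- volume of A is at least r/2
  have hvol_cb : volume (closedBall lam r) = ENNReal.ofReal (2 * r) := by
    rw [Real.volume_closedBall]
  have hcb_ne_top : volume (closedBall lam r) ≠ ∞ := by
    rw [hvol_cb]; exact ENNReal.ofReal_ne_top
  have hlow : ENNReal.ofReal (3/2 * r) ≤ volume (M ∩ closedBall lam r) := by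
    have h1 : (3/4 : ℝ≥0∞) * volume (closedBall lam r) < volume (M ∩ closedBall lam r) :=
      ENNReal.mul_lt_of_lt_div hr34
    have h34' : (3/4 : ℝ≥0∞) = ENNReal.ofReal (3/4) := by
      rw [ENNReal.ofReal_div_of_pos (by norm_num), ENNReal.ofReal_ofNat, ENNReal.ofReal_ofNat]
    have h2 : (3/4 : ℝ≥0∞) * volume (closedBall lam r) = ENNReal.ofReal (3/2 * r) := by
      rw [hvol_cb, h34', ← ENNReal.ofReal_mul (by norm_num)]
      congr 1
      ring
    rw [← h2]; exact h1.le
  have hvolA : ENNReal.ofReal (r/2) ≤ volume A := by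
    calc ENNReal.ofReal (r/2)
        = ENNReal.ofReal (3/2 * r) - ENNReal.ofReal (r/2 * 2) := by
          rw [← ENNReal.ofReal_sub _ (by positivity)]
          ring_nf
      _ ≤ volume (M ∩ closedBall lam r) - volume (closedBall lam (r/2)) := by
          apply tsub_le_tsub hlow
          rw [Real.volume_closedBall]
          exact le_of_eq (by ring_nf)
      _ ≤ volume A := le_measure_diff
  -- μ A = volume A
  have hμA : μ A = volume A := by
    rw [hμ, Measure.restrict_apply hAmeas,
      Set.inter_eq_self_of_subset_left (hAsub.trans hMsub)]
  -- pointwise lower bound on A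
  have hptwise : ∀ x ∈ A, (ENNReal.ofReal r⁻¹) ^ ((2:ℝ≥0∞).toReal)
      ≤ (‖f x‖₊ : ℝ≥0∞) ^ ((2:ℝ≥0∞).toReal) := by
    intro x hx
    have hxM : x ∈ M := hx.1.1
    have hxd : |x - lam| ≤ r := by
      have := hx.1.2
      rwa [mem_closedBall, Real.dist_eq] at this
    have hxd2 : r/2 < |x - lam| := by
      have := hx.2
      rw [mem_closedBall, Real.dist_eq, not_le] at this
      exact this
    have hxdpos : 0 < |x - lam| := lt_of_le_of_lt (by positivity) hxd2
    have hfx : f x = |x - lam|⁻¹ := by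
      simp [hf, Set.indicator_of_mem hxM]
    have h1 : r⁻¹ ≤ |x - lam|⁻¹ := inv_anti₀ hxdpos hxd
    have h2 : (ENNReal.ofReal r⁻¹) ≤ (‖f x‖₊ : ℝ≥0∞) := by
      rw [hfx, ← enorm_eq_nnnorm, Real.enorm_eq_ofReal (by positivity)]
      exact ENNReal.ofReal_le_ofReal h1
    exact ENNReal.rpow_le_rpow h2 (by norm_num)
  -- put it together
  have hchain : ENNReal.ofReal (1 / (2 * r)) ≤ C := by
    have h1 : (ENNReal.ofReal r⁻¹) ^ ((2:ℝ≥0∞).toReal) * μ A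
        ≤ ∫⁻ x in A, (‖f x‖₊ : ℝ≥0∞) ^ ((2:ℝ≥0∞).toReal) ∂μ := by
      rw [← setLIntegral_const A _]
      exact setLIntegral_mono' hAmeas hptwise
    have h2 : ∫⁻ x in A, (‖f x‖₊ : ℝ≥0∞) ^ ((2:ℝ≥0∞).toReal) ∂μ ≤ C :=
      setLIntegral_le_lintegral _ _
    have h3 : ENNReal.ofReal (1 / (2 * r))
        ≤ (ENNReal.ofReal r⁻¹) ^ ((2:ℝ≥0∞).toReal) * μ A := by
      rw [hμA, ENNReal.ofReal_rpow_of_pos (by positivity)]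
      calc ENNReal.ofReal (1 / (2 * r)) = ENNReal.ofReal (r⁻¹ ^ ((2:ℝ≥0∞).toReal) * (r/2)) := by
            congr 1
            rw [show ((2:ℝ≥0∞).toReal) = ((2:ℕ):ℝ) by simp, Real.rpow_natCast]
            field_simp
        _ = ENNReal.ofReal (r⁻¹ ^ ((2:ℝ≥0∞).toReal)) * ENNReal.ofReal (r/2) := by
            rw [ENNReal.ofReal_mul (by positivity)]
        _ ≤ ENNReal.ofReal (r⁻¹ ^ ((2:ℝ≥0∞).toReal)) * volume A := by
            exact mul_le_mul_right hvolA _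
    exact h3.trans (h1.trans h2)
  -- contradiction
  have hCc : C = ENNReal.ofReal C.toReal := (ENNReal.ofReal_toReal hC.ne).symm
  have hlt : C.toReal < 1 / (2 * r) := by
    have hrlt : r < 1 / (2 * (C.toReal + 1)) := lt_of_lt_of_le hrδ (min_le_right _ _)
    have hpos : 0 < C.toReal + 1 := by positivity
    have h' : r * (2 * (C.toReal + 1)) < 1 := (lt_div_iff₀ (by positivity)).mp hrlt
    rw [lt_div_iff₀ (by positivity)]
    nlinarith [ENNReal.toReal_nonneg (a := C)]
  have : C < C := by
    calc C = ENNReal.ofReal C.toReal := hCc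
      _ < ENNReal.ofReal (1 / (2 * r)) :=
          (ENNReal.ofReal_lt_ofReal_iff (by positivity)).mpr hlt
      _ ≤ C := hchain
  exact absurd this (lt_irrefl C)
end

section
/- If ξ ∈ L²([0,1],ℂ) satisfies that for every λ ∈ [0,1] the function t ↦ |t-λ|^{-1} ξ(t) belongs to L²([0,1],ℂ), then ξ = 0 almost everywhere. -/
open MeasureTheory Metric Filter Set Topology
open scoped ENNReal NNReal

theorem stmt_12
    (μ : Measure ℝ) (hμ : μ = volume.restrict (Set.Icc (0:ℝ) 1))
    (ξ : ℝ → ℂ) (hξ : MemLp ξ 2 μ)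
    (hL2 : ∀ lam ∈ Set.Icc (0:ℝ) 1,
      MemLp (fun t => (|t - lam|⁻¹ : ℝ) • ξ t) 2 μ) :
    ξ =ᵐ[μ] 0 := by
  by_contra hne
  have hsm : AEStronglyMeasurable ξ μ := hξ.1
  set ξ' := hsm.mk ξ with hξ'def
  have hae : ξ =ᵐ[μ] ξ' := hsm.ae_eq_mk
  have hmeas : StronglyMeasurable ξ' := hsm.stronglyMeasurable_mk
  -- the nonvanishing set has positive measure
  have h0 : μ {t | ξ' t ≠ 0} ≠ 0 := by
    intro h
    apply hne
    refine hae.trans ?_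
    change ∀ᵐ t ∂μ, ξ' t = (0 : ℝ → ℂ) t
    rw [ae_iff]
    simpa using h
  -- find a level set of positive measure
  have hcover : {t | ξ' t ≠ 0} ⊆ ⋃ n : ℕ, {t | 1/(n+1 : ℝ) ≤ ‖ξ' t‖} := by
    intro t ht
    have hpos : 0 < ‖ξ' t‖ := norm_pos_iff.mpr ht
    obtain ⟨n, hn⟩ := exists_nat_one_div_lt hpos
    exact mem_iUnion.2 ⟨n, hn.le⟩
  obtain ⟨n, hn⟩ : ∃ n : ℕ, μ {t | 1/(n+1:ℝ) ≤ ‖ξ' t‖} ≠ 0 := by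
    by_contra h
    push_neg at h
    exact h0 (measure_mono_null hcover (measure_iUnion_null h))
  set ε : ℝ := 1/(n+1) with hεdef
  have hεpos : 0 < ε := by positivity
  have hlevmeas : MeasurableSet {t : ℝ | ε ≤ ‖ξ' t‖} :=
    measurableSet_le measurable_const hmeas.measurable.norm
  set S : Set ℝ := {t | ε ≤ ‖ξ' t‖} ∩ Icc 0 1 with hSdef
  have hSmeas : MeasurableSet S := hlevmeas.inter measurableSet_Icc
  have hSIcc : S ⊆ Icc 0 1 := inter_subset_right
  have hSvol : volume S ≠ 0 := by
    have : μ {t | ε ≤ ‖ξ' t‖} = volume S := by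
      rw [hμ, Measure.restrict_apply hlevmeas]
    rw [← this]; exact hn
  -- Lebesgue density point
  have hdens := Besicovitch.ae_tendsto_measure_inter_div_of_measurableSet volume hSmeas
  obtain ⟨lam, hlamS, hlam⟩ : ∃ x ∈ S, Tendsto
      (fun r => volume (S ∩ closedBall x r) / volume (closedBall x r)) (𝓝[>] 0)
      (𝓝 (S.indicator 1 x)) := by
    by_contra hc
    push_neg at hc
    rw [ae_iff] at hdens
    exact hSvol (measure_mono_null (fun x hx hPx => hc x hx hPx) hdens)
  simp only [Set.indicator_of_mem hlamS, Pi.one_apply] at hlam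
  have hlamIcc : lam ∈ Icc (0:ℝ) 1 := hSIcc hlamS
  -- finiteness of the weighted L² norm
  have hC : (∫⁻ t, (‖(|t - lam|⁻¹ : ℝ) • ξ t‖₊ : ℝ≥0∞) ^ (2:ℝ≥0∞).toReal ∂μ) < ∞ :=
    lintegral_rpow_enorm_lt_top_of_eLpNorm_lt_top two_ne_zero ENNReal.ofNat_ne_top
      (hL2 lam hlamIcc).2
  rw [ENNReal.toReal_ofNat] at hC
  set C : ℝ≥0∞ := ∫⁻ t, (‖(|t - lam|⁻¹ : ℝ) • ξ t‖₊ : ℝ≥0∞) ^ (2:ℝ) ∂μ with hCdef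
  have hCeq : C = ∫⁻ t, (‖(|t - lam|⁻¹ : ℝ) • ξ' t‖₊ : ℝ≥0∞) ^ (2:ℝ) ∂μ := by
    apply lintegral_congr_ae
    filter_upwards [hae] with t ht
    rw [ht]
  -- key lower bound for small radii
  have key : ∀ r : ℝ, 0 < r →
      (1/2:ℝ≥0∞) < volume (S ∩ closedBall lam r) / volume (closedBall lam r) →
      ENNReal.ofReal (ε^2 / r) ≤ C := by
    intro r hr hratio
    have hball : volume (closedBall lam r) = ENNReal.ofReal (2*r) := by
      rw [Real.volume_closedBall]
    have hb0 : ENNReal.ofReal (2*r) ≠ 0 := by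
      simp only [ne_eq, ENNReal.ofReal_eq_zero, not_le]; linarith
    rw [hball, ENNReal.lt_div_iff_mul_lt (Or.inl hb0) (Or.inl ENNReal.ofReal_ne_top)] at hratio
    have hmeaslb : ENNReal.ofReal r ≤ volume (S ∩ closedBall lam r) := by
      have h1 : (1/2 : ℝ≥0∞) * ENNReal.ofReal (2*r) = ENNReal.ofReal r := by
        rw [ENNReal.ofReal_mul (by norm_num : (0:ℝ) ≤ 2), ← mul_assoc, ENNReal.ofReal_ofNat,
          one_div, ENNReal.inv_mul_cancel two_ne_zero ENNReal.ofNat_ne_top, one_mul]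
      rw [← h1]
      exact hratio.le
    set T : Set ℝ := (S ∩ closedBall lam r) \ {lam} with hTdef
    have hTIcc : T ⊆ Icc (0:ℝ) 1 := fun t ht => hSIcc ht.1.1
    have hμT : μ T = volume (S ∩ closedBall lam r) := by
      rw [hμ, Measure.restrict_apply' measurableSet_Icc,
        inter_eq_left.mpr hTIcc, measure_diff_null (measure_singleton lam)]
    have hpt : ∀ t ∈ T, ENNReal.ofReal ((ε/r)^2) ≤
        (‖(|t - lam|⁻¹ : ℝ) • ξ' t‖₊ : ℝ≥0∞) ^ (2:ℝ) := by
      intro t ht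
      have hd : |t - lam| ≤ r := by
        have := ht.1.2
        rwa [mem_closedBall, Real.dist_eq] at this
      have hd0 : 0 < |t - lam| := abs_pos.mpr (sub_ne_zero.mpr ht.2)
      have hnorm : ε ≤ ‖ξ' t‖ := ht.1.1.1
      have hreal : ε / r ≤ ‖(|t - lam|⁻¹ : ℝ) • ξ' t‖ := by
        rw [norm_smul, Real.norm_eq_abs, abs_of_nonneg (inv_nonneg.mpr (abs_nonneg _))]
        have hinv : r⁻¹ ≤ |t - lam|⁻¹ := inv_anti₀ hd0 hd
        calc ε / r = r⁻¹ * ε := by rw [div_eq_mul_inv]; ring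
          _ ≤ |t - lam|⁻¹ * ‖ξ' t‖ :=
            mul_le_mul hinv hnorm hεpos.le (inv_nonneg.mpr (abs_nonneg _))
      calc ENNReal.ofReal ((ε/r)^2) = ENNReal.ofReal (ε/r) ^ (2:ℝ) := by
            rw [show (2:ℝ) = ((2:ℕ):ℝ) by norm_num, ENNReal.rpow_natCast,
              ← ENNReal.ofReal_pow (by positivity)]
        _ ≤ (‖(|t - lam|⁻¹ : ℝ) • ξ' t‖₊ : ℝ≥0∞) ^ (2:ℝ) := by
            apply ENNReal.rpow_le_rpow _ (by norm_num)
            rw [← enorm_eq_nnnorm, ← ofReal_norm]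
            exact ENNReal.ofReal_le_ofReal hreal
    have hfmeas : Measurable fun t : ℝ =>
        (‖(|t - lam|⁻¹ : ℝ) • ξ' t‖₊ : ℝ≥0∞) ^ (2:ℝ) := by
      apply Measurable.pow_const
      apply Measurable.coe_nnreal_ennreal
      apply Measurable.nnnorm
      exact (((measurable_id.sub_const lam).abs.inv).smul hmeas.measurable)
    calc ENNReal.ofReal (ε^2/r) = ENNReal.ofReal ((ε/r)^2) * ENNReal.ofReal r := by
          rw [← ENNReal.ofReal_mul (by positivity)]
          congr 1
          field_simp
      _ ≤ ENNReal.ofReal ((ε/r)^2) * μ T := by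
          rw [hμT]
          exact mul_le_mul_right hmeaslb _
      _ = ∫⁻ _ in T, ENNReal.ofReal ((ε/r)^2) ∂μ := by
          rw [setLIntegral_const]
      _ ≤ ∫⁻ t in T, (‖(|t - lam|⁻¹ : ℝ) • ξ' t‖₊ : ℝ≥0∞) ^ (2:ℝ) ∂μ :=
          setLIntegral_mono hfmeas hpt
      _ ≤ ∫⁻ t, (‖(|t - lam|⁻¹ : ℝ) • ξ' t‖₊ : ℝ≥0∞) ^ (2:ℝ) ∂μ :=
          setLIntegral_le_lintegral _ _
      _ = C := hCeq.symm
  -- choose a radius small enough to contradict finiteness of C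
  set r₀ : ℝ := ε^2 / (C.toReal + 1) with hr₀def
  have hCt : 0 ≤ C.toReal := ENNReal.toReal_nonneg
  have hr₀pos : 0 < r₀ := by positivity
  have hhalf : ∀ᶠ r in 𝓝[>] (0:ℝ),
      (1/2 : ℝ≥0∞) < volume (S ∩ closedBall lam r) / volume (closedBall lam r) :=
    hlam.eventually (eventually_gt_nhds (by norm_num))
  have hsmall : Ioo (0:ℝ) r₀ ∈ 𝓝[>] (0:ℝ) :=
    Ioo_mem_nhdsGT_of_mem ⟨le_refl 0, hr₀pos⟩
  obtain ⟨r, hrhalf, hrIoo⟩ := (hhalf.and (eventually_of_mem hsmall (fun x hx => hx))).exists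
  have hrpos : 0 < r := hrIoo.1
  have hkey := key r hrpos hrhalf
  -- ε^2 / r > C.toReal + 1
  have hgt : C.toReal + 1 < ε^2 / r := by
    rw [lt_div_iff₀ hrpos]
    have h2 : r * (C.toReal + 1) < r₀ * (C.toReal + 1) := by
      apply mul_lt_mul_of_pos_right hrIoo.2
      positivity
    have h3 : r₀ * (C.toReal + 1) = ε^2 := by
      rw [hr₀def]; field_simp
    linarith [h2, h3.le]
  have hfin : C ≠ ⊤ := hC.ne
  have : C < ENNReal.ofReal (ε^2 / r) := by
    calc C = ENNReal.ofReal C.toReal := (ENNReal.ofReal_toReal hfin).symm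
      _ < ENNReal.ofReal (ε^2 / r) := by
          apply (ENNReal.ofReal_lt_ofReal_iff (by positivity)).mpr
          linarith
  exact absurd hkey (not_le.mpr this)
end

section
/- If ξ ∈ L²([0,1],ℂ) satisfies f_λ⁴ ξ ∈ L²([0,1],ℂ) for every λ ∈ [0,1], where f_λ(t) = |t-λ|^{-1/4}, then ξ = 0 in L². -/
open MeasureTheory Metric Set Filter Topology

theorem stmt_13
    (μ : Measure ℝ) (hμ : μ = volume.restrict (Set.Icc (0:ℝ) 1))
    (ξ : ℝ → ℂ) (hξ : MemLp ξ 2 μ)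
    (hL2 : ∀ lam ∈ Set.Icc (0:ℝ) 1,
      MemLp (fun t => ((|t - lam| ^ (-(1/4 : ℝ))) ^ 4 : ℝ) • ξ t) 2 μ) :
    ξ =ᵐ[μ] 0 := by
  by_contra hne
  set ξ' : ℝ → ℂ := hξ.1.mk ξ with hξ'def
  have hmeas' : StronglyMeasurable ξ' := hξ.1.stronglyMeasurable_mk
  have hae : ξ =ᵐ[μ] ξ' := hξ.1.ae_eq_mk
  have hne' : ¬ (ξ' =ᵐ[μ] 0) := fun h => hne (hae.trans h)
  -- find ε > 0 with positive measure where ‖ξ'‖ ≥ ε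
  obtain ⟨n, hn⟩ : ∃ n : ℕ, μ {t | 1/(n+1:ℝ) ≤ ‖ξ' t‖} ≠ 0 := by
    by_contra h
    push_neg at h
    apply hne'
    have : μ {t | ξ' t ≠ 0} = 0 := by
      refine measure_mono_null (fun t ht => ?_) (measure_iUnion_null h)
      obtain ⟨n, hn⟩ := exists_nat_one_div_lt (norm_pos_iff.2 ht)
      exact Set.mem_iUnion.2 ⟨n, hn.le⟩
    filter_upwards [measure_eq_zero_iff_ae_notMem.1 this] with t ht
    simpa using not_not.1 ht
  set ε : ℝ := 1/(n+1:ℝ) with hεdef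
  have hε : 0 < ε := by positivity
  set A : Set ℝ := Set.Icc 0 1 ∩ {t | ε ≤ ‖ξ' t‖} with hAdef
  have hAm : MeasurableSet A :=
    measurableSet_Icc.inter (hmeas'.measurable.norm measurableSet_Ici)
  have hAsub : A ⊆ Set.Icc 0 1 := Set.inter_subset_left
  have hSm : MeasurableSet {t | ε ≤ ‖ξ' t‖} :=
    measurableSet_le measurable_const hmeas'.measurable.norm
  have hA0 : volume A ≠ 0 := by
    rw [hμ, Measure.restrict_apply hSm] at hn
    rwa [hAdef, Set.inter_comm]
  -- density point
  obtain ⟨lam, hlamA, htend⟩ : ∃ lam ∈ A,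
      Tendsto (fun r => volume (A ∩ closedBall lam r) / volume (closedBall lam r))
        (𝓝[>] 0) (𝓝 1) := by
    have hbes := Besicovitch.ae_tendsto_measure_inter_div_of_measurableSet volume hAm
    rw [MeasureTheory.ae_iff] at hbes
    have hnsub : ¬ A ⊆ {x | ¬ Tendsto (fun r => volume (A ∩ closedBall x r) /
        volume (closedBall x r)) (𝓝[>] 0) (𝓝 (A.indicator 1 x))} :=
      fun h => hA0 (measure_mono_null h hbes)
    obtain ⟨lam, hlamA, hlamB⟩ := Set.not_subset.1 hnsub
    refine ⟨lam, hlamA, ?_⟩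
    have h1 : Tendsto (fun r => volume (A ∩ closedBall lam r) / volume (closedBall lam r))
        (𝓝[>] 0) (𝓝 (A.indicator 1 lam)) := not_not.1 hlamB
    rwa [Set.indicator_of_mem hlamA, Pi.one_apply] at h1
  have hlamIcc : lam ∈ Set.Icc (0:ℝ) 1 := hAsub hlamA
  -- radius r₀ with density ≥ 3/4
  obtain ⟨r₀, hr₀, hr⟩ : ∃ r₀ > 0, ∀ r ∈ Set.Ioc (0:ℝ) r₀,
      ENNReal.ofReal (3/2 * r) ≤ volume (A ∩ closedBall lam r) := by
    have h34 : ∀ᶠ r in 𝓝[>] (0:ℝ), ENNReal.ofReal (3/4) <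
        volume (A ∩ closedBall lam r) / volume (closedBall lam r) :=
      htend.eventually (eventually_gt_nhds (ENNReal.ofReal_lt_one.2 (by norm_num)))
    obtain ⟨u, hu, hsub⟩ := mem_nhdsGT_iff_exists_Ioc_subset.1 h34
    refine ⟨u, hu, fun r hr => ?_⟩
    have h1 := hsub hr
    have hball : volume (closedBall lam r) = ENNReal.ofReal (2*r) := Real.volume_closedBall lam r
    have h2 : ENNReal.ofReal (3/4) * volume (closedBall lam r) < volume (A ∩ closedBall lam r) :=
      (ENNReal.lt_div_iff_mul_lt (Or.inl (ne_of_gt (by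
          rw [hball]; exact ENNReal.ofReal_pos.2 (by linarith [hr.1]))))
        (Or.inl (by rw [hball]; exact ENNReal.ofReal_ne_top))).1 h1
    refine le_trans (le_of_eq ?_) h2.le
    rw [hball, ← ENNReal.ofReal_mul (by norm_num : (0:ℝ) ≤ 3/4)]
    ring_nf
  -- annuli
  set rk : ℕ → ℝ := fun k => r₀ / 2^k with hrkdef
  have hrkpos : ∀ k, 0 < rk k := fun k => by positivity
  have hrkle : ∀ k, rk k ≤ r₀ := fun k =>
    div_le_self hr₀.le (one_le_pow₀ one_le_two)
  have hrk_succ : ∀ k, (2:ℝ) * rk (k+1) = rk k := fun k => by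
    simp only [hrkdef, pow_succ]; field_simp
  have hrk_anti : ∀ i j : ℕ, i ≤ j → rk j ≤ rk i := fun i j hij => by
    simp only [hrkdef]
    gcongr
    norm_num

  set Ann : ℕ → Set ℝ := fun k => closedBall lam (rk k) \ closedBall lam (rk (k+1)) with hAnndef
  have hAnnm : ∀ k, MeasurableSet (Ann k) := fun k =>
    measurableSet_closedBall.diff measurableSet_closedBall
  have hdisj : Pairwise (Function.onFun Disjoint fun k => A ∩ Ann k) := by
    have key : ∀ i j : ℕ, i < j → Disjoint (A ∩ Ann i) (A ∩ Ann j) := by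
      intro i j hij
      rw [Set.disjoint_left]
      rintro t ⟨-, hti⟩ ⟨-, htj⟩
      have h1 : rk (i+1) < dist t lam := by
        simpa [hAnndef, mem_closedBall, not_le] using hti.2
      have h2 : dist t lam ≤ rk j := htj.1
      have h3 : rk j ≤ rk (i+1) := hrk_anti _ _ hij
      linarith
    intro i j hij
    rcases hij.lt_or_gt with h | h
    · exact key i j h
    · exact (key j i h).symm
  have hAnnVol : ∀ k, ENNReal.ofReal (rk k / 2) ≤ volume (A ∩ Ann k) := by
    intro k
    have hsub2 : A ∩ closedBall lam (rk k) ⊆ (A ∩ Ann k) ∪ closedBall lam (rk (k+1)) := by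
      rintro t ⟨htA, htB⟩
      by_cases h : t ∈ closedBall lam (rk (k+1))
      · exact Or.inr h
      · exact Or.inl ⟨htA, htB, h⟩
    have h3 := le_trans (hr (rk k) ⟨hrkpos k, hrkle k⟩)
      (le_trans (measure_mono hsub2) (measure_union_le _ _))
    rw [Real.volume_closedBall, hrk_succ k] at h3
    have h5 : ENNReal.ofReal (3/2 * rk k) = ENNReal.ofReal (rk k / 2) + ENNReal.ofReal (rk k) := by
      rw [← ENNReal.ofReal_add (by positivity) (by positivity)]; ring_nf
    rw [h5] at h3
    exact (ENNReal.add_le_add_iff_right ENNReal.ofReal_ne_top).1 h3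
  -- the integral
  set F : ℝ → ENNReal :=
    fun t => ((‖(((|t - lam| ^ (-(1/4:ℝ)))^4 : ℝ) • ξ t)‖₊ : ENNReal))^(2:ℝ) with hFdef
  have hfin : ∫⁻ t, F t ∂μ < ⊤ := by
    have h := (eLpNorm_lt_top_iff_lintegral_rpow_enorm_lt_top (p := 2)
      (by norm_num) (by norm_num)).1 (hL2 lam hlamIcc).2
    simp only [ENNReal.toReal_ofNat] at h; exact h
  set S : Set ℝ := ⋃ k, (A ∩ Ann k) with hSdef
  have hSm : MeasurableSet S := MeasurableSet.iUnion (fun k => hAm.inter (hAnnm k))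
  have hSsub : S ⊆ Set.Icc (0:ℝ) 1 := Set.iUnion_subset fun k =>
    (Set.inter_subset_left).trans hAsub
  have hterm : ∀ k, ENNReal.ofReal (ε^2/(2*r₀)) ≤ ∫⁻ t in A ∩ Ann k, F t ∂volume := by
    intro k
    have hsubk : A ∩ Ann k ⊆ Set.Icc (0:ℝ) 1 := (Set.inter_subset_left).trans hAsub
    have haek : ∀ᵐ t ∂(volume.restrict (A ∩ Ann k)), ξ t = ξ' t :=
      ae_restrict_of_ae_restrict_of_subset hsubk (hμ ▸ hae)
    have hmemk : ∀ᵐ t ∂(volume.restrict (A ∩ Ann k)), t ∈ A ∩ Ann k :=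
      ae_restrict_mem (hAm.inter (hAnnm k))
    have hpt : ∀ᵐ t ∂(volume.restrict (A ∩ Ann k)),
        ENNReal.ofReal (ε^2 / (rk k)^2) ≤ F t := by
      filter_upwards [haek, hmemk] with t hteq ⟨htA, htAnn⟩
      have hd1 : rk (k+1) < |t - lam| := by
        simpa [hAnndef, mem_closedBall, not_le, Real.dist_eq] using htAnn.2
      have hd2 : |t - lam| ≤ rk k := by
        simpa [mem_closedBall, Real.dist_eq] using htAnn.1
      have hdpos : 0 < |t - lam| := lt_trans (hrkpos _) hd1
      have hscal : ((|t - lam| ^ (-(1/4:ℝ)))^4 : ℝ) = |t - lam|⁻¹ := by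
        rw [← Real.rpow_natCast (|t - lam| ^ (-(1/4:ℝ))) 4, ← Real.rpow_mul hdpos.le]
        norm_num
        rw [Real.rpow_neg_one]
      have hnorm : ε / rk k ≤ ‖(((|t - lam| ^ (-(1/4:ℝ)))^4 : ℝ) • ξ t)‖ := by
        rw [norm_smul, hscal, Real.norm_eq_abs, abs_inv, abs_abs]
        have hξt : ε ≤ ‖ξ t‖ := by rw [hteq]; exact htA.2
        rw [div_eq_mul_inv, mul_comm]
        exact mul_le_mul (inv_anti₀ hdpos hd2) hξt hε.le (by positivity)
      rw [hFdef]
      calc ENNReal.ofReal (ε^2 / (rk k)^2)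
          = ENNReal.ofReal ((ε / rk k)^2) := by rw [← div_pow]
        _ = (ENNReal.ofReal (ε / rk k))^(2:ℝ) := by
            rw [ENNReal.ofReal_rpow_of_pos (by positivity)]
            norm_num
        _ ≤ (ENNReal.ofReal ‖(((|t - lam| ^ (-(1/4:ℝ)))^4 : ℝ) • ξ t)‖)^(2:ℝ) :=
            ENNReal.rpow_le_rpow (ENNReal.ofReal_le_ofReal hnorm) (by norm_num)
        _ = _ := congrArg (· ^ (2:ℝ)) (ofReal_norm _)
    calc ENNReal.ofReal (ε^2/(2*r₀))
        ≤ ENNReal.ofReal (ε^2 / (rk k)^2 * (rk k / 2)) := by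
          apply ENNReal.ofReal_le_ofReal
          have h1 : ε^2 / (rk k)^2 * (rk k / 2) = ε^2 / (2 * rk k) := by
            field_simp
          rw [h1]
          apply div_le_div_of_nonneg_left (by positivity) (by positivity) (by linarith [hrkle k])
      _ = ENNReal.ofReal (ε^2 / (rk k)^2) * ENNReal.ofReal (rk k / 2) :=
          ENNReal.ofReal_mul (by positivity)
      _ ≤ ENNReal.ofReal (ε^2 / (rk k)^2) * volume (A ∩ Ann k) :=
          mul_le_mul_right (hAnnVol k) _
      _ = ∫⁻ _ in A ∩ Ann k, ENNReal.ofReal (ε^2 / (rk k)^2) ∂volume := by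
          rw [setLIntegral_const]
      _ ≤ _ := lintegral_mono_ae hpt
  have key : (∫⁻ t in S, F t ∂volume) = ⊤ := by
    rw [hSdef, lintegral_iUnion (fun k => hAm.inter (hAnnm k)) hdisj]
    refine top_le_iff.1 ?_
    calc (⊤:ENNReal) = ∑' _ : ℕ, ENNReal.ofReal (ε^2/(2*r₀)) :=
        (ENNReal.tsum_const_eq_top_of_ne_zero
          (ENNReal.ofReal_pos.2 (by positivity)).ne').symm
      _ ≤ _ := ENNReal.tsum_le_tsum hterm
  have hcontra : (⊤:ENNReal) ≤ ∫⁻ t, F t ∂μ := by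
    calc (⊤:ENNReal) = ∫⁻ t in S, F t ∂volume := key.symm
      _ = ∫⁻ t in S, F t ∂μ := by
          rw [hμ, Measure.restrict_restrict hSm, Set.inter_eq_self_of_subset_left hSsub]
      _ ≤ ∫⁻ t, F t ∂μ := lintegral_mono' Measure.restrict_le_self le_rfl
  rw [top_le_iff.1 hcontra] at hfin
  exact absurd hfin (lt_irrefl _)
end

section
/- Fix λ ∈ [0,1] and set f_λ(t) = |t-λ|^{-1/4}. If ξ ∈ L²([0,1],ℂ) is such that the map t ↦ e^{i t f_λ} ξ from ℝ to L²([0,1],ℂ) is four times differentiable at 0, then f_λ⁴ ξ ∈ L²([0,1],ℂ). -/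
open Metric Filter

lemma bound4 {E : Type*} [NormedAddCommGroup E] [NormedSpace ℝ E]
    (g0 g1 g2 g3 g4 : ℝ → E) (R M : ℝ)
    (h0 : ∀ u ∈ ball (0:ℝ) R, HasDerivAt g0 (g1 u) u)
    (h1 : ∀ u ∈ ball (0:ℝ) R, HasDerivAt g1 (g2 u) u)
    (h2 : ∀ u ∈ ball (0:ℝ) R, HasDerivAt g2 (g3 u) u)
    (h3 : ∀ u ∈ ball (0:ℝ) R, HasDerivAt g3 (g4 u) u)
    (hM : ∀ u ∈ ball (0:ℝ) R, ‖g4 u‖ ≤ M)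
    (t : ℝ) (ht : |t| < R/5) :
    ‖g0 (4*t) - (4:ℝ) • g0 (3*t) + (6:ℝ) • g0 (2*t) - (4:ℝ) • g0 t + g0 0‖
      ≤ M * |t|^4 := by
  have hR : 0 < R := by
    have := abs_nonneg t; linarith
  have shift : ∀ (h h' : ℝ → E), (∀ x ∈ ball (0:ℝ) R, HasDerivAt h (h' x) x) →
      ∀ (c w : ℝ), w + c ∈ ball (0:ℝ) R →
      HasDerivAt (fun u => h (u + c)) (h' (w + c)) w := by
    intro h h' H c w hw
    have hf : HasDerivAt (fun u : ℝ => u + c) 1 w := by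
      simpa using (hasDerivAt_id w).add_const c
    simpa [Function.comp_def] using HasDerivAt.scomp w (H (w+c) hw) hf
  have mem : ∀ (r w : ℝ), |w| < r → r ≤ R → w ∈ ball (0:ℝ) r := by
    intro r w hw hr; simpa [Real.norm_eq_abs] using hw
  -- Step A : ‖g3(w+t) - g3 w‖ ≤ M * |t| on ball 0 (4R/5)
  have stepA : ∀ w ∈ ball (0:ℝ) (4*R/5), ‖g3 (w + t) - g3 w‖ ≤ M * |t| := by
    intro w hw
    have hw' : |w| < 4*R/5 := by simpa [Real.norm_eq_abs] using hw
    have h1' : ‖g3 (w+t) - g3 w‖ ≤ M * ‖(w+t) - w‖ :=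
      Convex.norm_image_sub_le_of_norm_hasDerivWithin_le
        (f := g3) (f' := g4) (s := ball (0:ℝ) R)
        (fun x hx => (h3 x hx).hasDerivWithinAt) hM (convex_ball _ _)
        (mem R w (by linarith) le_rfl)
        (mem R (w+t) (by have := abs_add_le w t; linarith) le_rfl)
    simpa using h1'
  -- D1 g2, with derivative D1 g3
  have hD1g2 : ∀ w ∈ ball (0:ℝ) (4*R/5),
      HasDerivWithinAt (fun u => g2 (u + t) - g2 u) (g3 (w + t) - g3 w) (ball (0:ℝ) (4*R/5)) w := by
    intro w hw
    have hw' : |w| < 4*R/5 := by simpa [Real.norm_eq_abs] using hw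
    exact (((shift g2 g3 h2 t w (mem R (w+t) (by have := abs_add_le w t; linarith) le_rfl)).sub
      (h2 w (mem R w (by linarith) le_rfl)))).hasDerivWithinAt
  -- Step B : second difference of g2
  have stepB : ∀ v ∈ ball (0:ℝ) (3*R/5),
      ‖(g2 (v + 2*t) - (2:ℝ) • g2 (v + t) + g2 v)‖ ≤ M * |t| * |t| := by
    intro v hv
    have hv' : |v| < 3*R/5 := by simpa [Real.norm_eq_abs] using hv
    have key : ‖(fun u => g2 (u + t) - g2 u) (v + t) - (fun u => g2 (u + t) - g2 u) v‖
        ≤ (M * |t|) * ‖(v + t) - v‖ :=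
      Convex.norm_image_sub_le_of_norm_hasDerivWithin_le
        (fun x hx => hD1g2 x hx) (fun x hx => stepA x hx) (convex_ball _ _)
        (mem (4*R/5) v (by linarith) (by linarith))
        (mem (4*R/5) (v+t) (by have := abs_add_le v t; linarith) (by linarith))
    have e : (fun u => g2 (u + t) - g2 u) (v + t) - (fun u => g2 (u + t) - g2 u) v
        = g2 (v + 2*t) - (2:ℝ) • g2 (v + t) + g2 v := by
      simp only []
      rw [two_smul]
      have : v + t + t = v + 2*t := by ring
      rw [this]; abel
    rw [e] at key
    calc ‖g2 (v + 2*t) - (2:ℝ) • g2 (v + t) + g2 v‖ ≤ (M * |t|) * ‖(v + t) - v‖ := key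
      _ = M * |t| * |t| := by simp
  -- D2 g1, derivative D2 g2
  have hD2g1 : ∀ v ∈ ball (0:ℝ) (3*R/5),
      HasDerivWithinAt (fun u => g1 (u + 2*t) - (2:ℝ) • g1 (u + t) + g1 u)
        (g2 (v + 2*t) - (2:ℝ) • g2 (v + t) + g2 v) (ball (0:ℝ) (3*R/5)) v := by
    intro v hv
    have hv' : |v| < 3*R/5 := by simpa [Real.norm_eq_abs] using hv
    have m1 : v + 2*t ∈ ball (0:ℝ) R :=
      mem R _ (by have := abs_add_le v (2*t); have := abs_mul 2 t; rw [abs_mul] at *; simp [abs_of_nonneg] at *; nlinarith [abs_nonneg t, abs_nonneg v]) le_rfl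
    have m2 : v + t ∈ ball (0:ℝ) R :=
      mem R _ (by have := abs_add_le v t; linarith) le_rfl
    have m3 : v ∈ ball (0:ℝ) R := mem R _ (by linarith) le_rfl
    exact (((shift g1 g2 h1 (2*t) v m1).sub
      ((shift g1 g2 h1 t v m2).const_smul (2:ℝ))).add (h1 v m3)).hasDerivWithinAt
  -- Step C : third difference of g1
  have stepC : ∀ u ∈ ball (0:ℝ) (2*R/5),
      ‖(g1 (u + 3*t) - (3:ℝ) • g1 (u + 2*t) + (3:ℝ) • g1 (u + t) - g1 u)‖ ≤ M * |t| * |t| * |t| := by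
    intro u hu
    have hu' : |u| < 2*R/5 := by simpa [Real.norm_eq_abs] using hu
    have key : ‖(fun w => g1 (w + 2*t) - (2:ℝ) • g1 (w + t) + g1 w) (u + t)
          - (fun w => g1 (w + 2*t) - (2:ℝ) • g1 (w + t) + g1 w) u‖
        ≤ (M * |t| * |t|) * ‖(u + t) - u‖ :=
      Convex.norm_image_sub_le_of_norm_hasDerivWithin_le
        (fun x hx => hD2g1 x hx) (fun x hx => stepB x hx) (convex_ball _ _)
        (mem (3*R/5) u (by linarith) (by linarith))
        (mem (3*R/5) (u+t) (by have := abs_add_le u t; linarith) (by linarith))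
    have e : (fun w => g1 (w + 2*t) - (2:ℝ) • g1 (w + t) + g1 w) (u + t)
          - (fun w => g1 (w + 2*t) - (2:ℝ) • g1 (w + t) + g1 w) u
        = g1 (u + 3*t) - (3:ℝ) • g1 (u + 2*t) + (3:ℝ) • g1 (u + t) - g1 u := by
      simp only []
      have e1 : u + t + 2*t = u + 3*t := by ring
      have e2 : u + t + t = u + 2*t := by ring
      rw [e1, e2, two_smul, two_smul]
      have h3s : (3:ℝ) • g1 (u + 2*t) = g1 (u+2*t) + g1 (u+2*t) + g1 (u+2*t) := by
        rw [show (3:ℝ) = 2 + 1 by norm_num, add_smul, two_smul, one_smul]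
      have h3s' : (3:ℝ) • g1 (u + t) = g1 (u+t) + g1 (u+t) + g1 (u+t) := by
        rw [show (3:ℝ) = 2 + 1 by norm_num, add_smul, two_smul, one_smul]
      rw [h3s, h3s']; abel
    rw [e] at key
    calc ‖g1 (u + 3*t) - (3:ℝ) • g1 (u + 2*t) + (3:ℝ) • g1 (u + t) - g1 u‖
        ≤ (M * |t| * |t|) * ‖(u + t) - u‖ := key
      _ = M * |t| * |t| * |t| := by simp
  -- D3 g0, derivative D3 g1
  have hD3g0 : ∀ u ∈ ball (0:ℝ) (2*R/5),
      HasDerivWithinAt (fun w => g0 (w + 3*t) - (3:ℝ) • g0 (w + 2*t) + (3:ℝ) • g0 (w + t) - g0 w)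
        (g1 (u + 3*t) - (3:ℝ) • g1 (u + 2*t) + (3:ℝ) • g1 (u + t) - g1 u)
        (ball (0:ℝ) (2*R/5)) u := by
    intro u hu
    have hu' : |u| < 2*R/5 := by simpa [Real.norm_eq_abs] using hu
    have habs3 : |3*t| ≤ 3 * |t| := by rw [abs_mul]; simp
    have habs2 : |2*t| ≤ 2 * |t| := by rw [abs_mul]; simp
    have m1 : u + 3*t ∈ ball (0:ℝ) R :=
      mem R _ (by have := abs_add_le u (3*t); linarith) le_rfl
    have m2 : u + 2*t ∈ ball (0:ℝ) R :=
      mem R _ (by have := abs_add_le u (2*t); linarith) le_rfl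
    have m3 : u + t ∈ ball (0:ℝ) R :=
      mem R _ (by have := abs_add_le u t; linarith) le_rfl
    have m4 : u ∈ ball (0:ℝ) R := mem R _ (by linarith) le_rfl
    exact ((((shift g0 g1 h0 (3*t) u m1).sub
      ((shift g0 g1 h0 (2*t) u m2).const_smul (3:ℝ))).add
      ((shift g0 g1 h0 t u m3).const_smul (3:ℝ))).sub (h0 u m4)).hasDerivWithinAt
  -- final MVT
  have key : ‖(fun w => g0 (w + 3*t) - (3:ℝ) • g0 (w + 2*t) + (3:ℝ) • g0 (w + t) - g0 w) t
        - (fun w => g0 (w + 3*t) - (3:ℝ) • g0 (w + 2*t) + (3:ℝ) • g0 (w + t) - g0 w) 0‖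
      ≤ (M * |t| * |t| * |t|) * ‖t - 0‖ :=
    Convex.norm_image_sub_le_of_norm_hasDerivWithin_le
      (fun x hx => hD3g0 x hx) (fun x hx => stepC x hx) (convex_ball _ _)
      (mem (2*R/5) 0 (by simp; linarith) (by linarith))
      (mem (2*R/5) t (by linarith) (by linarith))
  have e : (fun w => g0 (w + 3*t) - (3:ℝ) • g0 (w + 2*t) + (3:ℝ) • g0 (w + t) - g0 w) t
        - (fun w => g0 (w + 3*t) - (3:ℝ) • g0 (w + 2*t) + (3:ℝ) • g0 (w + t) - g0 w) 0
      = g0 (4*t) - (4:ℝ) • g0 (3*t) + (6:ℝ) • g0 (2*t) - (4:ℝ) • g0 t + g0 0 := by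
    simp only []
    have e1 : t + 3*t = 4*t := by ring
    have e2 : t + 2*t = 3*t := by ring
    have e3 : t + t = 2*t := by ring
    have e4 : (0:ℝ) + 3*t = 3*t := by ring
    have e5 : (0:ℝ) + 2*t = 2*t := by ring
    have e6 : (0:ℝ) + t = t := by ring
    rw [e1, e2, e3, e4, e5, e6]
    module
  rw [e] at key
  calc ‖g0 (4*t) - (4:ℝ) • g0 (3*t) + (6:ℝ) • g0 (2*t) - (4:ℝ) • g0 t + g0 0‖
      ≤ (M * |t| * |t| * |t|) * ‖t - 0‖ := key
    _ = M * |t|^4 := by rw [Real.norm_eq_abs, sub_zero]; ring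

open MeasureTheory Complex
open scoped ENNReal NNReal

theorem stmt_16
    (μ : Measure ℝ) (hμ : μ = volume.restrict (Set.Icc (0:ℝ) 1))
    (lam : ℝ) (hlam : lam ∈ Set.Icc (0:ℝ) 1)
    (ξ : Lp ℂ 2 μ) (F : ℝ → Lp ℂ 2 μ)
    (hF : ∀ t : ℝ, (F t : ℝ → ℂ) =ᵐ[μ]
      fun s => Complex.exp (Complex.I * (t * ((|s - lam| ^ (-(1/4 : ℝ)) : ℝ) : ℂ))) * (ξ : ℝ → ℂ) s)
    (hdiff : ContDiffAt ℝ 4 F 0) :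
    MemLp (fun s => ((|s - lam| ^ (-(1/4 : ℝ))) ^ 4 : ℝ) • (ξ : ℝ → ℂ) s) 2 μ := by
  set f : ℝ → ℝ := fun s => |s - lam| ^ (-(1/4 : ℝ)) with hf_def
  -- ## Part 1 : smoothness data and difference bound
  obtain ⟨U, hU, hcd⟩ := hdiff.contDiffOn le_rfl (by simp)
  obtain ⟨ε, hε, hballU⟩ := Metric.mem_nhds_iff.mp hU
  set g1 := deriv F with hg1
  set g2 := deriv g1 with hg2
  set g3 := deriv g2 with hg3
  set g4 := deriv g3 with hg4
  have hc : ContDiffOn ℝ 4 F (Metric.ball 0 ε) := hcd.mono hballU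
  have hc1 : ContDiffOn ℝ 3 g1 (Metric.ball 0 ε) :=
    hc.deriv_of_isOpen Metric.isOpen_ball (by norm_num)
  have hc2 : ContDiffOn ℝ 2 g2 (Metric.ball 0 ε) :=
    hc1.deriv_of_isOpen Metric.isOpen_ball (by norm_num)
  have hc3 : ContDiffOn ℝ 1 g3 (Metric.ball 0 ε) :=
    hc2.deriv_of_isOpen Metric.isOpen_ball (by norm_num)
  have hc4 : ContinuousOn g4 (Metric.ball 0 ε) :=
    hc3.continuousOn_deriv_of_isOpen Metric.isOpen_ball le_rfl
  have hsub : Metric.ball (0:ℝ) (ε/2) ⊆ Metric.ball 0 ε :=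
    Metric.ball_subset_ball (by linarith)
  have hd0 : ∀ u ∈ Metric.ball (0:ℝ) (ε/2), HasDerivAt F (g1 u) u := fun u hu =>
    ((hc.differentiableOn (by norm_num)).differentiableAt
      (Metric.isOpen_ball.mem_nhds (hsub hu))).hasDerivAt
  have hd1 : ∀ u ∈ Metric.ball (0:ℝ) (ε/2), HasDerivAt g1 (g2 u) u := fun u hu =>
    ((hc1.differentiableOn (by norm_num)).differentiableAt
      (Metric.isOpen_ball.mem_nhds (hsub hu))).hasDerivAt
  have hd2 : ∀ u ∈ Metric.ball (0:ℝ) (ε/2), HasDerivAt g2 (g3 u) u := fun u hu =>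
    ((hc2.differentiableOn (by norm_num)).differentiableAt
      (Metric.isOpen_ball.mem_nhds (hsub hu))).hasDerivAt
  have hd3 : ∀ u ∈ Metric.ball (0:ℝ) (ε/2), HasDerivAt g3 (g4 u) u := fun u hu =>
    ((hc3.differentiableOn (by norm_num)).differentiableAt
      (Metric.isOpen_ball.mem_nhds (hsub hu))).hasDerivAt
  obtain ⟨M₀, hM₀⟩ := (isCompact_closedBall (0:ℝ) (ε/2)).exists_bound_of_continuousOn
    (hc4.mono (Metric.closedBall_subset_ball (by linarith)))
  set M := max M₀ 0 with hM_def
  have hMnn : 0 ≤ M := le_max_right _ _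
  have hM : ∀ u ∈ Metric.ball (0:ℝ) (ε/2), ‖g4 u‖ ≤ M := fun u hu =>
    le_trans (hM₀ u (Metric.ball_subset_closedBall hu)) (le_max_left _ _)
  have hbound : ∀ t : ℝ, |t| < (ε/2)/5 →
      ‖F (4*t) - (4:ℝ) • F (3*t) + (6:ℝ) • F (2*t) - (4:ℝ) • F t + F 0‖ ≤ M * |t|^4 :=
    fun t ht => bound4 F g1 g2 g3 g4 (ε/2) M hd0 hd1 hd2 hd3 hM t ht
  -- ## Part 2 : a.e. pointwise identification of the fourth difference
  have hGcoe : ∀ t : ℝ,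
      ((F (4*t) - (4:ℝ) • F (3*t) + (6:ℝ) • F (2*t) - (4:ℝ) • F t + F 0 : Lp ℂ 2 μ) : ℝ → ℂ)
        =ᵐ[μ] fun s => (Complex.exp (Complex.I * ((t:ℂ) * (f s : ℂ))) - 1)^4 * (ξ : ℝ → ℂ) s := by
    intro t
    filter_upwards [Lp.coeFn_add (F (4*t) - (4:ℝ) • F (3*t) + (6:ℝ) • F (2*t) - (4:ℝ) • F t) (F 0),
      Lp.coeFn_sub (F (4*t) - (4:ℝ) • F (3*t) + (6:ℝ) • F (2*t)) ((4:ℝ) • F t),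
      Lp.coeFn_add (F (4*t) - (4:ℝ) • F (3*t)) ((6:ℝ) • F (2*t)),
      Lp.coeFn_sub (F (4*t)) ((4:ℝ) • F (3*t)),
      Lp.coeFn_smul (4:ℝ) (F (3*t)), Lp.coeFn_smul (6:ℝ) (F (2*t)), Lp.coeFn_smul (4:ℝ) (F t),
      hF (4*t), hF (3*t), hF (2*t), hF t, hF 0]
      with s q1 q2 q3 q4 q5 q6 q7 v4 v3 v2 v1 v0
    rw [q1, Pi.add_apply, q2, Pi.sub_apply, q3, Pi.add_apply, q4, Pi.sub_apply,
      q5, q6, q7, Pi.smul_apply, Pi.smul_apply, Pi.smul_apply, v4, v3, v2, v1, v0]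
    set a : ℂ := (f s : ℂ) with ha
    set z := Complex.exp (Complex.I * ((t:ℂ) * a)) with hz
    have h4 : Complex.exp (Complex.I * (((4*t : ℝ):ℂ) * a)) = z^4 := by
      rw [hz, ← Complex.exp_nat_mul]; congr 1; push_cast; ring
    have h3 : Complex.exp (Complex.I * (((3*t : ℝ):ℂ) * a)) = z^3 := by
      rw [hz, ← Complex.exp_nat_mul]; congr 1; push_cast; ring
    have h2 : Complex.exp (Complex.I * (((2*t : ℝ):ℂ) * a)) = z^2 := by
      rw [hz, ← Complex.exp_nat_mul]; congr 1; push_cast; ring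
    have h0 : Complex.exp (Complex.I * (((0:ℝ):ℂ) * a)) = 1 := by
      simp
    rw [h4, h3, h2, h0, Complex.real_smul, Complex.real_smul, Complex.real_smul]
    push_cast
    ring
  -- ## Part 3 : sequence of difference quotients and Fatou
  set δ : ℝ := ε/20 with hδ_def
  have hδpos : 0 < δ := by positivity
  set T : ℕ → ℝ := fun n => δ / (n+1) with hT_def
  have hTpos : ∀ n, 0 < T n := fun n => by positivity
  have hTlt : ∀ n, |T n| < (ε/2)/5 := by
    intro n
    rw [abs_of_pos (hTpos n)]
    have h1 : T n ≤ δ := by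
      rw [hT_def]
      apply div_le_self hδpos.le
      have : (0:ℝ) ≤ (n:ℝ) := Nat.cast_nonneg n
      linarith
    have : δ < (ε/2)/5 := by rw [hδ_def]; linarith
    linarith
  have hT0 : Filter.Tendsto T Filter.atTop (nhds 0) := by
    have h1 : Filter.Tendsto (fun n : ℕ => (1:ℝ)/(n+1)) Filter.atTop (nhds 0) :=
      tendsto_one_div_add_atTop_nhds_zero_nat
    have h2 := h1.const_mul δ
    simpa [hT_def, mul_one_div, div_eq_mul_inv] using h2
  set H : ℕ → Lp ℂ 2 μ := fun n =>
    ((T n)⁻¹^4 : ℝ) • (F (4*T n) - (4:ℝ) • F (3*T n) + (6:ℝ) • F (2*T n) - (4:ℝ) • F (T n) + F 0)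
    with hH_def
  have hHnorm : ∀ n, ‖H n‖ ≤ M := by
    intro n
    rw [hH_def]
    rw [norm_smul, Real.norm_eq_abs, abs_of_pos (by positivity : (0:ℝ) < (T n)⁻¹^4)]
    calc (T n)⁻¹^4 * ‖F (4*T n) - (4:ℝ) • F (3*T n) + (6:ℝ) • F (2*T n) - (4:ℝ) • F (T n) + F 0‖
        ≤ (T n)⁻¹^4 * (M * |T n|^4) := by
          apply mul_le_mul_of_nonneg_left (hbound _ (hTlt n)) (by positivity)
      _ = M := by
          rw [abs_of_pos (hTpos n)]
          field_simp
          exact mul_div_cancel_left₀ M (hTpos n).ne'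
  set Q : ℕ → ℝ → ℂ := fun n s =>
    ((T n)⁻¹ : ℝ) • (Complex.exp (Complex.I * ((T n : ℂ) * (f s : ℂ))) - 1) with hQ_def
  have hHcoe : ∀ n, (H n : ℝ → ℂ) =ᵐ[μ] fun s => (Q n s)^4 * (ξ : ℝ → ℂ) s := by
    intro n
    filter_upwards [Lp.coeFn_smul ((T n)⁻¹^4 : ℝ)
      (F (4*T n) - (4:ℝ) • F (3*T n) + (6:ℝ) • F (2*T n) - (4:ℝ) • F (T n) + F 0),
      hGcoe (T n)] with s q1 q2
    simp only [hH_def]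
    rw [q1, Pi.smul_apply, q2]
    simp only [hQ_def]
    rw [smul_pow, smul_mul_assoc]
  -- norm / lintegral bound for the quotients
  have hkey : ∀ n, ∫⁻ s, ((‖(Q n s)^4 * (ξ : ℝ → ℂ) s‖₊ : ℝ≥0∞)) ^ (2:ℝ) ∂μ
      ≤ (ENNReal.ofReal M) ^ (2:ℝ) := by
    intro n
    have h1 : eLpNorm (fun s => (Q n s)^4 * (ξ : ℝ → ℂ) s) 2 μ = eLpNorm (H n : ℝ → ℂ) 2 μ :=
      eLpNorm_congr_ae (hHcoe n).symm
    have h2 : eLpNorm (H n : ℝ → ℂ) 2 μ ≤ ENNReal.ofReal M := by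
      rw [← ENNReal.ofReal_toReal (Lp.eLpNorm_ne_top (H n)), ← Lp.norm_def]
      exact ENNReal.ofReal_le_ofReal (hHnorm n)
    rw [eLpNorm_eq_lintegral_rpow_enorm_toReal two_ne_zero ENNReal.ofNat_ne_top] at h1
    have h3 := h1.trans_le h2
    have h4 := ENNReal.rpow_le_rpow h3 (by norm_num : (0:ℝ) ≤ 2)
    rw [← ENNReal.rpow_mul] at h4
    norm_num at h4
    convert h4 using 2
    · simp only [← enorm_eq_nnnorm, enorm_mul, enorm_pow, ENNReal.rpow_two]
    · norm_num
  -- measurability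
  have hfm : Measurable f :=
    (measurable_id.sub_const lam).abs.pow measurable_const
  have hQm : ∀ n, Measurable (Q n) := by
    intro n
    simp only [hQ_def]
    have hco : Measurable fun s => ((f s : ℝ) : ℂ) := Complex.measurable_ofReal.comp hfm
    exact (((Complex.measurable_exp.comp
      (((hco.const_mul ((T n : ℂ)))).const_mul Complex.I)).sub measurable_const).const_smul ((T n)⁻¹ : ℝ))
  have hξm : AEMeasurable (ξ : ℝ → ℂ) μ := (Lp.aestronglyMeasurable ξ).aemeasurable
  have hΦm : ∀ n, AEMeasurable (fun s => ((‖(Q n s)^4 * (ξ : ℝ → ℂ) s‖₊ : ℝ≥0∞)) ^ (2:ℝ)) μ := by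
    intro n
    have h1 : AEMeasurable (fun s => (Q n s)^4 * (ξ : ℝ → ℂ) s) μ :=
      ((hQm n).pow_const 4).aemeasurable.mul hξm
    exact (ENNReal.continuous_rpow_const.measurable.comp_aemeasurable
      h1.aestronglyMeasurable.enorm)
  -- pointwise limits
  have hlim : ∀ s : ℝ, Filter.Tendsto (fun n => ((‖(Q n s)^4 * (ξ : ℝ → ℂ) s‖₊ : ℝ≥0∞)) ^ (2:ℝ))
      Filter.atTop (nhds (((‖((f s ^ 4 : ℝ)) • (ξ : ℝ → ℂ) s‖₊ : ℝ≥0∞)) ^ (2:ℝ))) := by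
    intro s
    have hQlim : Filter.Tendsto (fun n => Q n s) Filter.atTop
        (nhds (Complex.I * (f s : ℂ))) := by
      have hder : HasDerivAt (fun t : ℝ => Complex.exp (Complex.I * ((t:ℂ) * (f s : ℂ))))
          (Complex.I * (f s : ℂ)) 0 := by
        have h1 : HasDerivAt (fun t : ℝ => ((t : ℝ) : ℂ)) 1 0 := by
          simpa using (hasDerivAt_id (0:ℝ)).ofReal_comp
        have h2 := (h1.mul_const ((f s : ℝ) : ℂ)).const_mul Complex.I
        have h3 := h2.cexp
        simpa using h3
      have hslope := hasDerivAt_iff_tendsto_slope.mp hder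
      have hTne : Filter.Tendsto T Filter.atTop (nhdsWithin (0:ℝ) {(0:ℝ)}ᶜ) :=
        tendsto_nhdsWithin_of_tendsto_nhds_of_eventually_within _ hT0
          (Filter.Eventually.of_forall fun n => (ne_of_gt (hTpos n) : T n ≠ 0))
      have hcomp := hslope.comp hTne
      refine hcomp.congr ?_
      intro n
      show slope (fun t : ℝ => Complex.exp (Complex.I * ((t:ℂ) * (f s : ℂ)))) 0 (T n) = Q n s
      rw [slope_def_module]
      simp only [hQ_def]
      simp [Complex.exp_zero]
    have h2 : Filter.Tendsto (fun n => (Q n s)^4 * (ξ : ℝ → ℂ) s) Filter.atTop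
        (nhds ((Complex.I * (f s : ℂ))^4 * (ξ : ℝ → ℂ) s)) := (hQlim.pow 4).mul_const _
    have h3 : (Complex.I * (f s : ℂ))^4 = ((f s : ℂ))^4 := by
      rw [mul_pow, show (4:ℕ) = 2*2 from rfl, pow_mul, Complex.I_sq]; ring
    have h4 : ((f s : ℂ))^4 * (ξ : ℝ → ℂ) s = ((f s ^ 4 : ℝ)) • (ξ : ℝ → ℂ) s := by
      rw [Complex.real_smul]; push_cast; ring
    rw [h3, h4] at h2
    have h5 := ENNReal.tendsto_coe.mpr h2.nnnorm
    exact ((ENNReal.continuous_rpow_const.tendsto _).comp h5 : _)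
  -- Fatou
  have hΦ : ∫⁻ s, ((‖((f s ^ 4 : ℝ)) • (ξ : ℝ → ℂ) s‖₊ : ℝ≥0∞)) ^ (2:ℝ) ∂μ
      ≤ (ENNReal.ofReal M) ^ (2:ℝ) := by
    have heq : (fun s => ((‖((f s ^ 4 : ℝ)) • (ξ : ℝ → ℂ) s‖₊ : ℝ≥0∞)) ^ (2:ℝ))
        = fun s => Filter.liminf
            (fun n => ((‖(Q n s)^4 * (ξ : ℝ → ℂ) s‖₊ : ℝ≥0∞)) ^ (2:ℝ)) Filter.atTop :=
      funext fun s => ((hlim s).liminf_eq).symm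
    rw [heq]
    calc ∫⁻ s, Filter.liminf
            (fun n => ((‖(Q n s)^4 * (ξ : ℝ → ℂ) s‖₊ : ℝ≥0∞)) ^ (2:ℝ)) Filter.atTop ∂μ
        ≤ Filter.liminf
            (fun n => ∫⁻ s, ((‖(Q n s)^4 * (ξ : ℝ → ℂ) s‖₊ : ℝ≥0∞)) ^ (2:ℝ) ∂μ) Filter.atTop :=
          lintegral_liminf_le' hΦm
      _ ≤ (ENNReal.ofReal M) ^ (2:ℝ) := by
          apply Filter.liminf_le_of_frequently_le (Filter.Frequently.of_forall hkey)
  -- ## conclusion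
  constructor
  · exact ((hfm.pow_const 4).aestronglyMeasurable.smul (Lp.aestronglyMeasurable ξ))
  · rw [eLpNorm_eq_lintegral_rpow_enorm_toReal two_ne_zero ENNReal.ofNat_ne_top]
    have htr : ((2:ℝ≥0∞)).toReal = (2:ℝ) := by norm_num
    rw [htr]
    refine ENNReal.rpow_lt_top_of_nonneg (by norm_num) ?_
    exact ne_top_of_le_ne_top (ENNReal.rpow_ne_top_of_nonneg (by norm_num) ENNReal.ofReal_ne_top) hΦ
end
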